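/- The function F = Σ_{m=2}^∞ (−1)^m χ_{(−1/m, −1/(m+1)]} on [−1,0] is Lebesgue integrable, is the limit in the Alexiewicz norm (and in L¹ norm) of its partial sums F_n = Σ_{m=2}^n (−1)^m χ_{(−1/m,−1/(m+1)]}, each of which is left continuous, but F does not have a left limit at 0; hence the space of left continuous integrable functions is not complete under the Alexiewicz norm nor under the L¹ norm. In particular ‖F − F_n‖_{L¹} = 1/(n+1). -/

import Mathlib

open Set Filter Topology MeasureTheory intervalIntegral

/-- `F = Σ_{m=2}^∞ (-1)^m χ_{(-1/m, -1/(m+1)]}` (indexed here by `m = k+2`). -/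
noncomputable def Fser : ℝ → ℝ := fun x =>
  ∑' k : ℕ, (-1 : ℝ) ^ (k + 2) *
    Set.indicator (Set.Ioc (-(1 : ℝ) / (k + 2)) (-(1 : ℝ) / (k + 3))) 1 x

/-- The partial sum `F_n = Σ_{m=2}^n (-1)^m χ_{(-1/m, -1/(m+1)]}`. -/
noncomputable def Fpart (n : ℕ) : ℝ → ℝ := fun x =>
  ∑ k ∈ Finset.range (n - 1), (-1 : ℝ) ^ (k + 2) *
    Set.indicator (Set.Ioc (-(1 : ℝ) / (k + 2)) (-(1 : ℝ) / (k + 3))) 1 x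

namespace FserAux

/-- The interval on which the `k`-th summand is supported. -/
def Ik (k : ℕ) : Set ℝ := Set.Ioc (-(1 : ℝ) / (k + 2)) (-(1 : ℝ) / (k + 3))

/-- The `k`-th summand. -/
noncomputable def term (k : ℕ) : ℝ → ℝ := fun x =>
  (-1 : ℝ) ^ (k + 2) * Set.indicator (Ik k) 1 x

lemma Fser_eq_tsum (x : ℝ) : Fser x = ∑' k, term k x := rfl

lemma Fpart_eq (n : ℕ) (x : ℝ) :
    Fpart n x = ∑ k ∈ Finset.range (n - 1), term k x := rfl

lemma neg_one_div_mono {a b : ℝ} (ha : 0 < a) (h : a ≤ b) : -1 / a ≤ -1 / b := by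
  have h1 := one_div_le_one_div_of_le ha h
  have : -(1 / a) ≤ -(1 / b) := by linarith
  simpa [neg_div] using this

lemma neg_one_div_neg {a : ℝ} (ha : 0 < a) : -1 / a < 0 := by
  rw [neg_div]
  simpa using (div_pos one_pos ha)

lemma mem_unique {j k : ℕ} {x : ℝ} (hj : x ∈ Ik j) (hk : x ∈ Ik k) : j = k := by
  by_contra hne
  have key : ∀ {p q : ℕ}, p < q → x ∈ Ik p → x ∈ Ik q → False := by
    intro p q hpq hp hq
    have hcast : (p : ℝ) + 3 ≤ (q : ℝ) + 2 := by
      have : (p : ℝ) + 1 ≤ q := by exact_mod_cast hpq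
      linarith
    have h1 : x ≤ -1 / ((p : ℝ) + 3) := hp.2
    have h2 : -1 / ((q : ℝ) + 2) < x := hq.1
    have h3 : -1 / ((p : ℝ) + 3) ≤ -1 / ((q : ℝ) + 2) :=
      neg_one_div_mono (by positivity) hcast
    linarith
  rcases lt_or_gt_of_ne hne with h | h
  · exact key h hj hk
  · exact key h hk hj

lemma term_of_mem {k : ℕ} {x : ℝ} (h : x ∈ Ik k) : term k x = (-1 : ℝ) ^ k := by
  simp [term, Set.indicator_of_mem h, pow_add]

lemma term_of_nmem {k : ℕ} {x : ℝ} (h : x ∉ Ik k) : term k x = 0 := by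
  simp [term, Set.indicator_of_notMem h]

lemma Fser_of_mem {k : ℕ} {x : ℝ} (h : x ∈ Ik k) : Fser x = (-1 : ℝ) ^ k := by
  rw [Fser_eq_tsum, tsum_eq_single k]
  · exact term_of_mem h
  · intro j hj
    exact term_of_nmem fun hx => hj (mem_unique hx h)

lemma Fser_of_nmem {x : ℝ} (h : ∀ k, x ∉ Ik k) : Fser x = 0 := by
  rw [Fser_eq_tsum]
  have : ∀ k, term k x = 0 := fun k => term_of_nmem (h k)
  simp [this]

lemma Fpart_of_mem {n k : ℕ} {x : ℝ} (h : x ∈ Ik k) (hk : k < n - 1) :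
    Fpart n x = (-1 : ℝ) ^ k := by
  rw [Fpart_eq, Finset.sum_eq_single k]
  · exact term_of_mem h
  · intro j _ hne
    exact term_of_nmem fun hx => hne (mem_unique hx h)
  · intro hk'
    exact absurd (Finset.mem_range.mpr hk) hk'

lemma Fpart_of_nmem {n : ℕ} {x : ℝ} (h : ∀ j, j < n - 1 → x ∉ Ik j) :
    Fpart n x = 0 := by
  rw [Fpart_eq]
  exact Finset.sum_eq_zero fun j hj => term_of_nmem (h j (Finset.mem_range.mp hj))

lemma exists_mem {x : ℝ} (h1 : -1 / 2 < x) (h2 : x < 0) : ∃ k, x ∈ Ik k := by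
  set t : ℝ := -1 / x with ht
  have ht2 : 2 < t := by
    rw [ht, lt_div_iff_of_neg h2]
    linarith
  have ht0 : 0 ≤ t := by linarith
  have hm3 : 3 ≤ ⌈t⌉₊ := by
    have : (2 : ℕ) < ⌈t⌉₊ := Nat.lt_ceil.mpr (by exact_mod_cast ht2)
    omega
  have hx0 : x ≠ 0 := ne_of_lt h2
  have htx : t * x = -1 := by
    rw [ht]; field_simp
  refine ⟨⌈t⌉₊ - 3, ?_, ?_⟩
  · have hcast : ((⌈t⌉₊ - 3 : ℕ) : ℝ) + 2 = (⌈t⌉₊ : ℝ) - 1 := by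
      have : ((⌈t⌉₊ - 3 : ℕ) : ℝ) = (⌈t⌉₊ : ℝ) - 3 := by
        push_cast [Nat.cast_sub hm3]; ring
      linarith
    rw [hcast]
    have hlt : (⌈t⌉₊ : ℝ) - 1 < t := by
      have := Nat.ceil_lt_add_one ht0
      linarith
    have hpos : (0 : ℝ) < (⌈t⌉₊ : ℝ) - 1 := by
      have : (3 : ℝ) ≤ (⌈t⌉₊ : ℝ) := by exact_mod_cast hm3
      linarith
    rw [div_lt_iff₀ hpos]
    have hmul : ((⌈t⌉₊ : ℝ) - 1) * x > t * x := mul_lt_mul_of_neg_right hlt h2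
    nlinarith
  · have hcast : ((⌈t⌉₊ - 3 : ℕ) : ℝ) + 3 = (⌈t⌉₊ : ℝ) := by
      push_cast [Nat.cast_sub hm3]; ring
    rw [hcast]
    have hle : t ≤ (⌈t⌉₊ : ℝ) := Nat.le_ceil t
    have hpos : (0 : ℝ) < (⌈t⌉₊ : ℝ) := by
      have : (3 : ℝ) ≤ (⌈t⌉₊ : ℝ) := by exact_mod_cast hm3
      linarith
    rw [le_div_iff₀ hpos]
    nlinarith

lemma measurable_term (k : ℕ) : Measurable (term k) := by
  have : MeasurableSet (Ik k) := measurableSet_Ioc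
  exact ((measurable_const (a := (1 : ℝ))).indicator this).const_mul _

lemma summable_term (x : ℝ) : Summable (fun k => term k x) := by
  by_cases h : ∃ k, x ∈ Ik k
  · obtain ⟨k, hk⟩ := h
    refine summable_of_ne_finset_zero (s := {k}) fun j hj => ?_
    exact term_of_nmem fun hx => hj (by simp [mem_unique hx hk])
  · push_neg at h
    exact summable_of_ne_finset_zero (s := ∅) fun j _ => term_of_nmem (h j)

lemma measurable_Fser : Measurable Fser := by
  refine measurable_of_tendsto_metrizable'
    (f := fun n x => ∑ k ∈ Finset.range n, term k x) atTop
    (fun n => Finset.measurable_sum _ fun k _ => measurable_term k) ?_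
  rw [tendsto_pi_nhds]
  intro x
  exact ((summable_term x).hasSum).tendsto_sum_nat

lemma abs_Fser_le_one (x : ℝ) : |Fser x| ≤ 1 := by
  by_cases h : ∃ k, x ∈ Ik k
  · obtain ⟨k, hk⟩ := h
    rw [Fser_of_mem hk]
    simp [abs_pow]
  · push_neg at h
    rw [Fser_of_nmem h]
    simp

lemma indicator_leftCont (a b c : ℝ) :
    Tendsto (Set.indicator (Ioc a b) (1 : ℝ → ℝ)) (𝓝[<] c)
      (𝓝 (Set.indicator (Ioc a b) (1 : ℝ → ℝ) c)) := by
  by_cases hc : c ∈ Ioc a b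
  · rw [Set.indicator_of_mem hc]
    refine tendsto_const_nhds.congr' ?_
    filter_upwards [Ioo_mem_nhdsLT_of_mem (show c ∈ Ioc a c from ⟨hc.1, le_refl c⟩)]
      with x hx
    have hm : x ∈ Ioc a b := ⟨hx.1, hx.2.le.trans hc.2⟩
    simp [Set.indicator_of_mem hm]
  · rw [Set.indicator_of_notMem hc]
    by_cases hcb : b < c
    · refine tendsto_const_nhds.congr' ?_
      filter_upwards [Ioo_mem_nhdsLT_of_mem (show c ∈ Ioc b c from ⟨hcb, le_refl c⟩)]
        with x hx
      have hm : x ∉ Ioc a b := fun hm => absurd hm.2 (not_le.mpr hx.1)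
      simp [Set.indicator_of_notMem hm]
    · have hca : c ≤ a := by
        by_contra hac
        exact hc ⟨not_le.mp hac, not_lt.mp hcb⟩
      refine tendsto_const_nhds.congr' ?_
      filter_upwards [self_mem_nhdsWithin] with x (hx : x < c)
      have hm : x ∉ Ioc a b := fun hm => absurd hm.1 (not_lt.mpr (hx.le.trans hca))
      simp [Set.indicator_of_notMem hm]

/-- Pointwise formula for the difference `F - F_n` (for `n ≥ 2`). -/
lemma diff_eq {n : ℕ} (hn : 2 ≤ n) (x : ℝ) :
    |Fser x - Fpart n x| = Set.indicator (Ioo (-(1 : ℝ) / (n + 1)) 0) 1 x := by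
  by_cases h : ∃ k, x ∈ Ik k
  · obtain ⟨k, hk⟩ := h
    by_cases hkn : k < n - 1
    · rw [Fser_of_mem hk, Fpart_of_mem hk hkn]
      have hcast : (k : ℝ) + 3 ≤ (n : ℝ) + 1 := by
        have : k + 3 ≤ n + 1 := by omega
        exact_mod_cast this
      have hxle : x ≤ -1 / ((n : ℝ) + 1) :=
        hk.2.trans (neg_one_div_mono (by positivity) hcast)
      have hnm : x ∉ Ioo (-(1 : ℝ) / (n + 1)) 0 := by
        intro hx
        exact absurd hx.1 (not_lt.mpr hxle)
      simp [Set.indicator_of_notMem hnm]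
    · push_neg at hkn
      rw [Fser_of_mem hk,
        Fpart_of_nmem (fun j hj hx => absurd (mem_unique hx hk) (by omega))]
      have hcast : (n : ℝ) + 1 ≤ (k : ℝ) + 2 := by
        have : n + 1 ≤ k + 2 := by omega
        exact_mod_cast this
      have hmem : x ∈ Ioo (-(1 : ℝ) / (n + 1)) 0 := by
        constructor
        · have h1 : -1 / ((n : ℝ) + 1) ≤ -1 / ((k : ℝ) + 2) :=
            neg_one_div_mono (by positivity) hcast
          exact h1.trans_lt hk.1
        · exact hk.2.trans_lt (neg_one_div_neg (by positivity))
      rw [Set.indicator_of_mem hmem]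
      simp [abs_pow]
  · push_neg at h
    rw [Fser_of_nmem h, Fpart_of_nmem (fun j _ => h j)]
    have hnm : x ∉ Ioo (-(1 : ℝ) / (n + 1)) 0 := by
      intro hx
      have hcast : (2 : ℝ) ≤ (n : ℝ) + 1 := by
        have : (2 : ℕ) ≤ n + 1 := by omega
        exact_mod_cast this
      have h12 : -1 / 2 < x :=
        (neg_one_div_mono two_pos hcast).trans_lt hx.1
      obtain ⟨k, hk⟩ := exists_mem h12 hx.2
      exact h k hk
    simp [Set.indicator_of_notMem hnm]

lemma Ioo_subset_Icc {a : ℝ} (ha : -1 ≤ a) :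
    Ioo a (0 : ℝ) ⊆ Icc (-1 : ℝ) 0 :=
  fun x hx => ⟨ha.trans hx.1.le, hx.2.le⟩

end FserAux

open FserAux

/-- On `[-1,0]`: `F` is Lebesgue integrable; each partial sum `F_n` is left continuous;
`‖F - F_n‖_{L¹} = 1/(n+1)`; `F_n → F` in the Alexiewicz norm; but `F` has no left limit
at `0`, so the space of left continuous integrable functions is complete neither in the
Alexiewicz norm nor in the `L¹` norm. -/
theorem leftContinuous_integrable_not_complete :
    IntegrableOn Fser (Icc (-1 : ℝ) 0) volume ∧
    (∀ n : ℕ, ∀ c ∈ Ioc (-1 : ℝ) 0,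
      Tendsto (Fpart n) (𝓝[<] c) (𝓝 (Fpart n c))) ∧
    (∀ n : ℕ, 2 ≤ n →
      ∫ x in Icc (-1 : ℝ) 0, |Fser x - Fpart n x| = 1 / (n + 1)) ∧
    (∀ ε > (0 : ℝ), ∃ N : ℕ, ∀ n ≥ N, ∀ c d : ℝ, -1 ≤ c → c ≤ d → d ≤ 0 →
      |∫ x in c..d, (Fser x - Fpart n x)| ≤ ε) ∧
    ¬ ∃ L : ℝ, Tendsto Fser (𝓝[<] (0 : ℝ)) (𝓝 L) := by
  -- a helper for the integral of the indicator of `Ioo a 0` over an interval set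
  have hInd : ∀ a : ℝ, a ≤ 0 → ∀ s : Set ℝ, MeasurableSet s →
      ∫ x in s, Set.indicator (Ioo a 0) (1 : ℝ → ℝ) x =
        (volume (s ∩ Ioo a 0)).toReal := by
    intro a _ s _
    rw [setIntegral_indicator measurableSet_Ioo]
    simp [Measure.restrict_apply' (measurableSet_Ioo (a := a) (b := (0 : ℝ))), measureReal_def]
  refine ⟨?_, ?_, ?_, ?_, ?_⟩
  · -- integrability
    refine Integrable.mono' (g := fun _ => (1 : ℝ))
      (integrableOn_const (by simp))
      measurable_Fser.aestronglyMeasurable.restrict ?_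
    exact Filter.Eventually.of_forall fun x => by
      simpa using abs_Fser_le_one x
  · -- left continuity of partial sums
    intro n c _
    have : Tendsto (fun x => ∑ k ∈ Finset.range (n - 1), term k x) (𝓝[<] c)
        (𝓝 (∑ k ∈ Finset.range (n - 1), term k c)) := by
      refine tendsto_finset_sum _ fun k _ => ?_
      exact (indicator_leftCont _ _ c).const_mul _
    exact this
  · -- L¹ distance
    intro n hn
    have key : ∀ x : ℝ, |Fser x - Fpart n x| =
        Set.indicator (Ioo (-(1 : ℝ) / (n + 1)) 0) 1 x := diff_eq hn
    have ha : -(1 : ℝ) / (n + 1) ≤ 0 :=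
      (neg_one_div_neg (by positivity : (0 : ℝ) < (n : ℝ) + 1)).le
    have ha1 : (-1 : ℝ) ≤ -(1 : ℝ) / (n + 1) := by
      have h2 : (1 : ℝ) ≤ (n : ℝ) + 1 := by
        have := Nat.cast_nonneg (α := ℝ) n
        linarith
      calc (-1 : ℝ) = -1 / 1 := by norm_num
        _ ≤ -(1 : ℝ) / (n + 1) := neg_one_div_mono one_pos h2
    calc ∫ x in Icc (-1 : ℝ) 0, |Fser x - Fpart n x|
        = ∫ x in Icc (-1 : ℝ) 0,
            Set.indicator (Ioo (-(1 : ℝ) / (n + 1)) 0) (1 : ℝ → ℝ) x := by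
          simp_rw [key]
      _ = (volume (Icc (-1 : ℝ) 0 ∩ Ioo (-(1 : ℝ) / (n + 1)) 0)).toReal :=
          hInd _ ha _ measurableSet_Icc
      _ = 1 / (n + 1) := by
          rw [Set.inter_eq_self_of_subset_right (Ioo_subset_Icc ha1)]
          rw [Real.volume_Ioo]
          rw [ENNReal.toReal_ofReal (by linarith)]
          ring
  · -- Alexiewicz norm convergence
    intro ε hε
    obtain ⟨N₀, hN₀⟩ := exists_nat_one_div_lt hε
    refine ⟨N₀ + 2, fun n hn c d hc hcd hd => ?_⟩
    have hn2 : 2 ≤ n := by omega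
    have key : ∀ x : ℝ, |Fser x - Fpart n x| =
        Set.indicator (Ioo (-(1 : ℝ) / (n + 1)) 0) 1 x := diff_eq hn2
    have habs := intervalIntegral.abs_integral_le_integral_abs
      (f := fun x => Fser x - Fpart n x) (μ := volume) hcd
    have hval : ∫ x in c..d, |Fser x - Fpart n x| ≤ 1 / ((n : ℝ) + 1) := by
      have h1 : ∫ x in c..d, |Fser x - Fpart n x|
          = (volume (Ioc c d ∩ Ioo (-(1 : ℝ) / (n + 1)) 0)).toReal := by
        rw [intervalIntegral.integral_of_le hcd]
        simp_rw [key]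
        exact hInd _ (neg_one_div_neg (by positivity : (0 : ℝ) < (n : ℝ) + 1)).le _
          measurableSet_Ioc
      rw [h1]
      have h2 : volume (Ioc c d ∩ Ioo (-(1 : ℝ) / (n + 1)) 0)
          ≤ volume (Ioo (-(1 : ℝ) / (n + 1)) 0) :=
        measure_mono Set.inter_subset_right
      have h3 : (volume (Ioo (-(1 : ℝ) / (n + 1)) 0)).toReal = 1 / ((n : ℝ) + 1) := by
        rw [Real.volume_Ioo, ENNReal.toReal_ofReal (by
          have h := (neg_one_div_neg (by positivity : (0 : ℝ) < (n : ℝ) + 1)).le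
          linarith)]
        ring
      calc (volume (Ioc c d ∩ Ioo (-(1 : ℝ) / (n + 1)) 0)).toReal
          ≤ (volume (Ioo (-(1 : ℝ) / (n + 1)) 0)).toReal :=
            ENNReal.toReal_mono (by rw [Real.volume_Ioo]; exact ENNReal.ofReal_ne_top) h2
        _ = 1 / ((n : ℝ) + 1) := h3
    have hfin : (1 : ℝ) / ((n : ℝ) + 1) ≤ 1 / ((N₀ : ℝ) + 1) := by
      have hcast : ((N₀ : ℝ)) + 1 ≤ (n : ℝ) + 1 := by
        have : N₀ + 1 ≤ n + 1 := by omega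
        exact_mod_cast this
      exact one_div_le_one_div_of_le (by positivity) hcast
    linarith
  · -- no left limit at 0
    rintro ⟨L, hL⟩
    have hmem : ∀ k : ℕ, (-1 / ((k : ℝ) + 3)) ∈ Ik k := by
      intro k
      constructor
      · have hp : (0 : ℝ) < (k : ℝ) + 2 := by positivity
        have := one_div_lt_one_div_of_lt hp (by linarith : (k : ℝ) + 2 < (k : ℝ) + 3)
        rw [neg_div, neg_div]
        linarith
      · exact le_refl _
    have hFval : ∀ k : ℕ, Fser (-1 / ((k : ℝ) + 3)) = (-1 : ℝ) ^ k :=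
      fun k => Fser_of_mem (hmem k)
    have hten : ∀ a c : ℝ, 0 < a → 0 < c →
        Tendsto (fun j : ℕ => -1 / (a * (j : ℝ) + c)) atTop (𝓝[<] (0 : ℝ)) := by
      intro a c hac hcc
      apply tendsto_nhdsWithin_of_tendsto_nhds_of_eventually_within
      · have h1 : Tendsto (fun j : ℕ => a * (j : ℝ) + c) atTop atTop :=
          tendsto_atTop_add_const_right _ c
            ((tendsto_natCast_atTop_atTop (R := ℝ)).const_mul_atTop hac)
        have h2 := h1.inv_tendsto_atTop
        have h3 : Tendsto (fun j : ℕ => -1 / (a * (j : ℝ) + c)) atTop (𝓝 (-0)) := by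
          refine h2.neg.congr fun j => ?_
          simp [neg_div]
        simpa using h3
      · filter_upwards with j
        exact neg_one_div_neg (by positivity)
    have hL1 : L = 1 := by
      have h2 : Tendsto (fun j : ℕ => Fser (-1 / (2 * (j : ℝ) + 3))) atTop (𝓝 L) :=
        hL.comp (hten 2 3 two_pos (by norm_num))
      have h3 : Tendsto (fun _ : ℕ => (1 : ℝ)) atTop (𝓝 L) := by
        refine h2.congr fun j => ?_
        have hc : (2 : ℝ) * (j : ℝ) + 3 = ((2 * j : ℕ) : ℝ) + 3 := by push_cast; ring
        rw [hc, hFval (2 * j)]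
        simp [pow_mul]
      exact tendsto_nhds_unique h3 tendsto_const_nhds
    have hL2 : L = -1 := by
      have h2 : Tendsto (fun j : ℕ => Fser (-1 / (2 * (j : ℝ) + 4))) atTop (𝓝 L) :=
        hL.comp (hten 2 4 two_pos (by norm_num))
      have h3 : Tendsto (fun _ : ℕ => (-1 : ℝ)) atTop (𝓝 L) := by
        refine h2.congr fun j => ?_
        have hc : (2 : ℝ) * (j : ℝ) + 4 = ((2 * j + 1 : ℕ) : ℝ) + 3 := by push_cast; ring
        rw [hc, hFval (2 * j + 1)]
        simp [pow_succ, pow_mul]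
      exact tendsto_nhds_unique h3 tendsto_const_nhds
    linarith [hL1, hL2]
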